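/- Let A be a ring and M an (A,A)-bimodule. The trivial extension A ⋉ M (the ring whose underlying additive group is A × M with multiplication (a,m)(a',m') = (aa', am' + ma')) is strongly unit nil-clean if and only if A is strongly unit nil-clean. -/

import Mathlib

/-- An element `x` of a ring is *strongly nil-clean* if `x = e + b` where `e` is an
idempotent, `b` is nilpotent, and `e` and `b` commute. -/
def IsStronglyNilClean {R : Type*} [Ring R] (x : R) : Prop :=
  ∃ e b : R, IsIdempotentElem e ∧ IsNilpotent b ∧ e * b = b * e ∧ x = e + b

/-- A ring `R` is *strongly unit nil-clean* if for every `x : R` there is a unit `u`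
such that `u * x` is strongly nil-clean. -/
def StronglyUnitNilClean (R : Type*) [Ring R] : Prop :=
  ∀ x : R, ∃ u : Rˣ, IsStronglyNilClean ((u : R) * x)

/-- A ring `R` is *unit-regular* if every `a : R` satisfies `a = a * u * a` for some unit `u`. -/
def UnitRegular (R : Type*) [Ring R] : Prop :=
  ∀ a : R, ∃ u : Rˣ, a = a * (u : R) * a

/-- A group is *locally finite* if every finitely generated subgroup is finite. -/
def LocallyFiniteGroup (G : Type*) [Group G] : Prop :=
  ∀ H : Subgroup G, H.FG → (H : Set G).Finite

/-- A subset `T` of a ring is *nilpotent* if there is `n ≥ 1` such that every product of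
`n` elements of `T` is zero. -/
def IsNilpotentSubset {R : Type*} [Ring R] (T : Set R) : Prop :=
  ∃ n : ℕ, 0 < n ∧ ∀ l : List R, (∀ a ∈ l, a ∈ T) → l.length = n → l.prod = 0

/-- A subset `S` of a ring is *locally nilpotent* if the non-unital subring generated by
any finite subset of `S` is nilpotent. -/
def IsLocallyNilpotentSet {R : Type*} [Ring R] (S : Set R) : Prop :=
  ∀ F : Finset R, (F : Set R) ⊆ S →
    IsNilpotentSubset ((NonUnitalSubring.closure (F : Set R) : Set R))

/-- A ring is *NI* if the set of nilpotent elements forms a two-sided ideal. -/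
def IsNIRing (R : Type*) [Ring R] : Prop :=
  ∃ I : TwoSidedIdeal R, ∀ x : R, x ∈ I ↔ IsNilpotent x

/-- A ring is *weakly 2-primal* if its set of nilpotent elements is a two-sided ideal
which is moreover locally nilpotent. -/
def Weakly2Primal (R : Type*) [Ring R] : Prop :=
  IsNIRing R ∧ IsLocallyNilpotentSet {x : R | IsNilpotent x}

section Aux

open Polynomial

/-- Images of integer polynomials at a common point commute. -/
lemma aeval_commute {R : Type*} [Ring R] (x : R) (p q : Polynomial ℤ) :
    Commute (Polynomial.aeval x p) (Polynomial.aeval x q) := by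
  unfold Commute SemiconjBy
  rw [← map_mul, ← map_mul, mul_comm]

lemma sq_sub_dvd_pow_sub {S : Type*} [CommRing S] (t : S) :
    ∀ n : ℕ, 1 ≤ n → (t ^ 2 - t) ∣ (t ^ n - t)
  | 0, h => by omega
  | 1, _ => by simp
  | (n + 2), _ => by
    have ih := sq_sub_dvd_pow_sub t (n + 1) (by omega)
    have : t ^ (n + 2) - t = t * (t ^ (n + 1) - t) + (t ^ 2 - t) := by ring
    rw [this]
    exact dvd_add (Dvd.dvd.mul_left ih t) dvd_rfl

lemma key_dvd (n : ℕ) (hn : 1 ≤ n) :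
    ((X : Polynomial ℤ) ^ 2 - X) ∣ (X - (1 - (1 - X ^ n) ^ n)) := by
  set Y : Polynomial ℤ := 1 - X ^ n with hY
  have h1 : ((X : Polynomial ℤ) ^ 2 - X) ∣ (X ^ n - X) := sq_sub_dvd_pow_sub X n hn
  have h2 : ((X : Polynomial ℤ) ^ 2 - X) ∣ (Y ^ 2 - Y) := by
    have : Y ^ 2 - Y = (X ^ (2 * n) - X) - (X ^ n - X) := by
      rw [hY]; ring
    rw [this]
    exact dvd_sub (sq_sub_dvd_pow_sub X (2 * n) (by omega)) h1
  have h3 : ((X : Polynomial ℤ) ^ 2 - X) ∣ (Y ^ n - Y) := by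
    rcases sq_sub_dvd_pow_sub Y n hn with ⟨c, hc⟩
    rcases h2 with ⟨d, hd⟩
    exact ⟨d * c, by rw [hc, hd, mul_assoc]⟩
  have : X - (1 - (1 - X ^ n) ^ n) = (Y ^ n - Y) - (X ^ n - X) := by
    rw [hY]; ring
  rw [this]
  exact dvd_sub h3 h1

/-- An element is strongly nil-clean iff `x - x ^ 2` is nilpotent. -/
lemma isStronglyNilClean_iff_isNilpotent {R : Type*} [Ring R] (x : R) :
    IsStronglyNilClean x ↔ IsNilpotent (x - x ^ 2) := by
  constructor
  · rintro ⟨e, b, he, hb, hc, rfl⟩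
    have hcomm : Commute e b := hc
    have key : (e + b) - (e + b) ^ 2 = b * (1 - 2 * e - b) := by
      have h1 : e * e = e := he
      have h2 : e * b = b * e := hc
      calc (e + b) - (e + b) ^ 2
          = e + b - (e * e + e * b + b * e + b * b) := by noncomm_ring
        _ = e + b - (e + b * e + b * e + b * b) := by rw [h1, h2]
        _ = b * (1 - 2 * e - b) := by noncomm_ring
    rw [key]
    have hcb : Commute b (1 - 2 * e - b) := by
      have c2e : Commute b (2 * e) := (Commute.ofNat_right b 2).mul_right hcomm.symm
      exact (((Commute.one_right b).sub_right c2e).sub_right (Commute.refl b))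
    exact hcb.isNilpotent_mul_right hb
  · rintro ⟨n, hn⟩
    rcases Nat.eq_zero_or_pos n with rfl | hpos
    · -- degenerate: the ring is trivial
      have h1 : (1 : R) = 0 := by simpa using hn
      refine ⟨0, 0, ?_, ?_, by simp, ?_⟩
      · simp [IsIdempotentElem]
      · exact ⟨1, by simp⟩
      · have : x = x * 1 := by simp
        rw [this, h1, mul_zero, add_zero]
    · set e : R := 1 - (1 - x ^ n) ^ n with he_def
      have he : IsIdempotentElem e := isIdempotentElem_one_sub_one_sub_pow_pow x n hn
      -- e is the image of an integer polynomial at x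
      have heval : e = Polynomial.aeval x (1 - (1 - X ^ n) ^ n : Polynomial ℤ) := by
        simp [he_def]
      have hx : x = Polynomial.aeval x (X : Polynomial ℤ) := by simp
      -- x - e is nilpotent
      rcases key_dvd n hpos with ⟨c, hc⟩
      have hb : x - e = (x ^ 2 - x) * Polynomial.aeval x c := by
        have := congrArg (Polynomial.aeval x) hc
        simpa [map_mul, map_sub, map_pow, map_one, ← he_def] using this
      have hnilb : IsNilpotent (x - e) := by
        rw [hb]
        have hcomm : Commute (x ^ 2 - x) (Polynomial.aeval x c) := by
          have := aeval_commute x ((X : Polynomial ℤ) ^ 2 - X) c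
          simpa [map_sub, map_pow] using this
        refine hcomm.isNilpotent_mul_right ⟨n, ?_⟩
        have : x ^ 2 - x = -(x - x ^ 2) := (neg_sub x (x ^ 2)).symm
        rw [this, neg_pow]
        rw [hn, mul_zero]
      have hcex : Commute e x := by
        rw [heval]
        nth_rewrite 2 [hx]
        exact aeval_commute x _ _
      exact ⟨e, x - e, he, hnilb, (hcex.sub_right (Commute.refl e)),
        by rw [add_sub_cancel]⟩

open TrivSqZeroExt

lemma tsze_isNilpotent_iff {A : Type*} {M : Type*} [Ring A] [AddCommGroup M] [Module A M]
    [Module Aᵐᵒᵖ M] [SMulCommClass A Aᵐᵒᵖ M] (p : TrivSqZeroExt A M) :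
    IsNilpotent p ↔ IsNilpotent p.fst := by
  constructor
  · rintro ⟨n, hn⟩
    exact ⟨n, by rw [← fst_pow, hn, fst_zero]⟩
  · rintro ⟨n, hn⟩
    have h0 : (p ^ n).fst = 0 := by rw [fst_pow, hn]
    refine ⟨n * 2, ?_⟩
    rw [pow_mul, pow_two]
    ext
    · rw [fst_mul, h0, zero_mul, fst_zero]
    · simp [snd_mul, h0]

end Aux

theorem trivSqZeroExt_stronglyUnitNilClean_iff
    (A : Type*) (M : Type*) [Ring A] [AddCommGroup M] [Module A M]
    [Module Aᵐᵒᵖ M] [SMulCommClass A Aᵐᵒᵖ M] :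
    StronglyUnitNilClean (TrivSqZeroExt A M) ↔ StronglyUnitNilClean A := by
  open TrivSqZeroExt in
  have key : ∀ p : TrivSqZeroExt A M, IsStronglyNilClean p ↔ IsStronglyNilClean p.fst := by
    intro p
    rw [isStronglyNilClean_iff_isNilpotent, isStronglyNilClean_iff_isNilpotent,
      tsze_isNilpotent_iff]
    rw [fst_sub, fst_pow]
  constructor
  · intro h a
    obtain ⟨u, hu⟩ := h (TrivSqZeroExt.inl a)
    have hv : IsUnit ((u : TrivSqZeroExt A M).fst) :=
      TrivSqZeroExt.isUnit_iff_isUnit_fst.mp u.isUnit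
    refine ⟨hv.unit, ?_⟩
    have := (key _).mp hu
    rwa [TrivSqZeroExt.fst_mul, TrivSqZeroExt.fst_inl, ← hv.unit_spec] at this
  · intro h x
    obtain ⟨u, hu⟩ := h x.fst
    refine ⟨Units.map (TrivSqZeroExt.inlHom A M).toMonoidHom u, ?_⟩
    rw [key]
    rw [TrivSqZeroExt.fst_mul, Units.coe_map]
    simpa using hu
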